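/- arXiv:0907.5522 — 6 statements merged into one kernel-verified Lean document; each statement's English description precedes it below -/
import Mathlib

section
/- The function H(φ, y) = φ²(y² - φ²/4 + cφ/3 + g/2) is a first integral of the polynomial planar system dφ/dζ = 2φy, dy/dζ = φ² - cφ - g - 2y²: the gradient of H is orthogonal to the vector field at every point of ℝ², i.e., 2φy·∂H/∂φ + (φ² - cφ - g - 2y²)·∂H/∂y ≡ 0. -/
/-- H(φ,y) = φ²(y² - φ²/4 + cφ/3 + g/2) is a first integral of the polynomial
system dφ/dζ = 2φy, dy/dζ = φ² - cφ - g - 2y²: the gradient of H is orthogonal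
to the vector field at every point. -/
theorem stmt_3 (c g : ℝ) (H : ℝ → ℝ → ℝ)
    (hH : ∀ p q : ℝ, H p q = p ^ 2 * (q ^ 2 - p ^ 2 / 4 + c * p / 3 + g / 2)) :
    ∀ p q : ℝ,
      2 * p * q * deriv (fun x => H x q) p
        + (p ^ 2 - c * p - g - 2 * q ^ 2) * deriv (fun x => H p x) q = 0 := by
  intro p q
  have h1 : deriv (fun x => H x q) p
      = 2 * p * (q ^ 2 - p ^ 2 / 4 + c * p / 3 + g / 2)
        + p ^ 2 * (-(2 * p) / 4 + c / 3) := by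
    have : (fun x => H x q) = fun x => x ^ 2 * (q ^ 2 - x ^ 2 / 4 + c * x / 3 + g / 2) := by
      funext x; exact hH x q
    rw [this]
    have h : HasDerivAt (fun x : ℝ => x ^ 2 * (q ^ 2 - x ^ 2 / 4 + c * x / 3 + g / 2))
        (2 * p * (q ^ 2 - p ^ 2 / 4 + c * p / 3 + g / 2)
          + p ^ 2 * (-(2 * p) / 4 + c / 3)) p := by
      have := (hasDerivAt_pow 2 p).mul
        ((((hasDerivAt_const p (q ^ 2)).sub ((hasDerivAt_pow 2 p).div_const 4)).add
          (((hasDerivAt_const p c).mul (hasDerivAt_id p)).div_const 3)).add_const (g / 2))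
      simp only [id] at this
      refine this.congr_deriv ?_
      simp only [Pi.add_apply, Pi.sub_apply, Pi.mul_apply, id, Nat.cast_ofNat]
      ring
    rw [h.deriv]
  have h2 : deriv (fun x => H p x) q = p ^ 2 * (2 * q) := by
    have : (fun x => H p x) = fun x => p ^ 2 * (x ^ 2 - p ^ 2 / 4 + c * p / 3 + g / 2) := by
      funext x; exact hH p x
    rw [this]
    have h : HasDerivAt (fun x : ℝ => p ^ 2 * (x ^ 2 - p ^ 2 / 4 + c * p / 3 + g / 2))
        (p ^ 2 * (2 * q ^ 1)) q := by
      have := ((hasDerivAt_pow 2 q).sub_const (p^2/4)).add_const (c*p/3)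
      exact ((this.add_const (g/2)).const_mul (p^2))
    rw [h.deriv]; ring_nf
  rw [h1, h2]; ring
end

section
/- Suppose c > 0 and -c²/4 < g < -2c²/9. Then at the equilibrium (φ₀⁻, 0) the Jacobian determinant -4φ₀⁻(φ₀⁻ - c/2) is strictly positive with zero trace (center), while at (φ₀⁺, 0) the Jacobian determinant -4φ₀⁺(φ₀⁺ - c/2) is strictly negative (saddle). -/
/-- For c > 0 and -c²/4 < g < -2c²/9: at (φ₀⁻, 0) the Jacobian determinant is
positive with zero trace (center), at (φ₀⁺, 0) it is negative (saddle). -/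
theorem stmt_10 (c g : ℝ) (hc : 0 < c)
    (hg1 : -c ^ 2 / 4 < g) (hg2 : g < -2 * c ^ 2 / 9) :
    (0 < -4 * ((c - Real.sqrt (c ^ 2 + 4 * g)) / 2)
        * ((c - Real.sqrt (c ^ 2 + 4 * g)) / 2 - c / 2)) ∧
    (-3 * (0 : ℝ) = 0) ∧
    (-4 * ((c + Real.sqrt (c ^ 2 + 4 * g)) / 2)
        * ((c + Real.sqrt (c ^ 2 + 4 * g)) / 2 - c / 2) < 0) := by
  set s := Real.sqrt (c ^ 2 + 4 * g) with hs
  have hs0 : 0 < s := Real.sqrt_pos.mpr (by nlinarith)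
  have hsc : s < c := by
    exact (Real.sqrt_lt' hc).mpr (by nlinarith)
  refine ⟨by nlinarith, by ring, by nlinarith⟩
end

section
/- Let c < 0 and -c²/4 < g < -2c²/9. On the level set H(φ, y) = H(φ₀⁻, 0) of the first integral H(φ, y) = φ²(y² - φ²/4 + cφ/3 + g/2), one has for φ ≠ 0: y² = (φ - φ₀⁻)²(φ² + l₁φ + l₂)/(4φ²), where φ₀⁻ = (c - √(c²+4g))/2, l₁ = -(c + 3√(c²+4g))/3, l₂ = (c² + 6g - c√(c²+4g))/6. -/
/-- On the level set H(φ,y) = H(φ₀⁻, 0), for φ ≠ 0 we have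
y² = (φ - φ₀⁻)²(φ² + l₁φ + l₂)/(4φ²). -/
theorem stmt_12 (c g : ℝ) (hc : c < 0)
    (hg1 : -c ^ 2 / 4 < g) (hg2 : g < -2 * c ^ 2 / 9)
    (H : ℝ → ℝ → ℝ)
    (hH : ∀ p q : ℝ, H p q = p ^ 2 * (q ^ 2 - p ^ 2 / 4 + c * p / 3 + g / 2))
    (φ₀ l₁ l₂ : ℝ)
    (hφ₀ : φ₀ = (c - Real.sqrt (c ^ 2 + 4 * g)) / 2)
    (hl₁ : l₁ = -(c + 3 * Real.sqrt (c ^ 2 + 4 * g)) / 3)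
    (hl₂ : l₂ = (c ^ 2 + 6 * g - c * Real.sqrt (c ^ 2 + 4 * g)) / 6) :
    ∀ φ y : ℝ, φ ≠ 0 → H φ y = H φ₀ 0 →
      y ^ 2 = (φ - φ₀) ^ 2 * (φ ^ 2 + l₁ * φ + l₂) / (4 * φ ^ 2) := by
  intro φ y hφ heq
  have hpos : (0:ℝ) ≤ c ^ 2 + 4 * g := by nlinarith
  set s := Real.sqrt (c ^ 2 + 4 * g) with hs
  have hs2 : s ^ 2 = c ^ 2 + 4 * g := Real.sq_sqrt hpos
  rw [hH, hH] at heq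
  subst hφ₀ hl₁ hl₂
  rw [eq_div_iff (by positivity : (4:ℝ) * φ ^ 2 ≠ 0)]
  linear_combination 4 * heq +
    ((-s ^ 2 + 4 * s * φ + 2 * c * s + 12 * φ ^ 2 - 4 * c * φ - c ^ 2) / 16) * hs2
end

section
/- Let c < 0 and -c²/4 < g < -2c²/9, φ₀⁻ = (c - √(c²+4g))/2, φ₁⁻ = (c + 3√(c²+4g) - 2√(c² + 3c√(c²+4g)))/6, l₁ = -(c + 3√(c²+4g))/3, l₂ = (c² + 6g - c√(c²+4g))/6. Then φ₁⁻ is a root of φ² + l₁φ + l₂ = 0, and the quadratic φ² + l₁φ + l₂ is nonnegative on the interval [φ₀⁻, φ₁⁻]. -/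
/-- φ₁⁻ is a root of φ² + l₁φ + l₂ = 0 and the quadratic is nonnegative on
[φ₀⁻, φ₁⁻]. -/
theorem stmt_13 (c g : ℝ) (hc : c < 0)
    (hg1 : -c ^ 2 / 4 < g) (hg2 : g < -2 * c ^ 2 / 9)
    (φ₀ φ₁ l₁ l₂ : ℝ)
    (hφ₀ : φ₀ = (c - Real.sqrt (c ^ 2 + 4 * g)) / 2)
    (hφ₁ : φ₁ = (c + 3 * Real.sqrt (c ^ 2 + 4 * g)
      - 2 * Real.sqrt (c ^ 2 + 3 * c * Real.sqrt (c ^ 2 + 4 * g))) / 6)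
    (hl₁ : l₁ = -(c + 3 * Real.sqrt (c ^ 2 + 4 * g)) / 3)
    (hl₂ : l₂ = (c ^ 2 + 6 * g - c * Real.sqrt (c ^ 2 + 4 * g)) / 6) :
    φ₁ ^ 2 + l₁ * φ₁ + l₂ = 0 ∧
    ∀ φ ∈ Set.Icc φ₀ φ₁, 0 ≤ φ ^ 2 + l₁ * φ + l₂ := by
  set s := Real.sqrt (c ^ 2 + 4 * g) with hs
  set t := Real.sqrt (c ^ 2 + 3 * c * s) with ht
  have hs0 : (0:ℝ) ≤ s := Real.sqrt_nonneg _
  have ht0 : (0:ℝ) ≤ t := Real.sqrt_nonneg _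
  have hs2 : s ^ 2 = c ^ 2 + 4 * g := Real.sq_sqrt (by nlinarith)
  have hsmall : s ^ 2 < c ^ 2 / 9 := by nlinarith
  have harg : 0 ≤ c ^ 2 + 3 * c * s := by nlinarith [sq_nonneg (c + 3 * s)]
  have ht2 : t ^ 2 = c ^ 2 + 3 * c * s := Real.sq_sqrt harg
  constructor
  · subst hφ₁ hl₁ hl₂
    linear_combination (-1/4 : ℝ) * hs2 + (1/9 : ℝ) * ht2
  · intro φ hφ
    obtain ⟨h1, h2⟩ := hφ
    have hle : φ ≤ (c + 3 * s - 2 * t) / 6 := by rw [hφ₁] at h2; exact h2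
    have hr2 : φ ≤ (c + 3 * s + 2 * t) / 6 := by linarith
    have key : φ ^ 2 + l₁ * φ + l₂
        = ((c + 3 * s - 2 * t) / 6 - φ) * ((c + 3 * s + 2 * t) / 6 - φ) := by
      rw [hl₁, hl₂]
      linear_combination (-1/4 : ℝ) * hs2 + (1/9 : ℝ) * ht2
    rw [key]
    exact mul_nonneg (by linarith) (by linarith)
end

section
/- Let c > 0 and -c²/4 < g < -2c²/9, and set φ₀⁺ = (c + √(c²+4g))/2, m₁ = -(c - 3√(c²+4g))/3, m₂ = (c² + 6g + c√(c²+4g))/6, h₀ = H(φ₀⁺, 0) where H(φ, y) = φ²(y² - φ²/4 + cφ/3 + g/2). Then the polynomial identity φ⁴ - (4c/3)φ³ - 2gφ² + 4h₀ = (φ - φ₀⁺)²(φ² + m₁φ + m₂) holds for all real φ. -/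
/-- Polynomial identity behind the homoclinic orbit for c > 0:
φ⁴ - (4c/3)φ³ - 2gφ² + 4h₀ = (φ - φ₀⁺)²(φ² + m₁φ + m₂). -/
theorem stmt_16 (c g : ℝ) (hc : 0 < c)
    (hg1 : -c ^ 2 / 4 < g) (hg2 : g < -2 * c ^ 2 / 9)
    (φ₀ m₁ m₂ h₀ : ℝ)
    (hφ₀ : φ₀ = (c + Real.sqrt (c ^ 2 + 4 * g)) / 2)
    (hm₁ : m₁ = -(c - 3 * Real.sqrt (c ^ 2 + 4 * g)) / 3)
    (hm₂ : m₂ = (c ^ 2 + 6 * g + c * Real.sqrt (c ^ 2 + 4 * g)) / 6)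
    (hh₀ : h₀ = φ₀ ^ 2 * ((0:ℝ) ^ 2 - φ₀ ^ 2 / 4 + c * φ₀ / 3 + g / 2)) :
    ∀ φ : ℝ,
      φ ^ 4 - (4 * c / 3) * φ ^ 3 - 2 * g * φ ^ 2 + 4 * h₀
        = (φ - φ₀) ^ 2 * (φ ^ 2 + m₁ * φ + m₂) := by
  intro φ
  set s := Real.sqrt (c ^ 2 + 4 * g) with hsdef
  have hs : s ^ 2 = c ^ 2 + 4 * g := by
    rw [hsdef]
    exact Real.sq_sqrt (by nlinarith)
  subst hh₀ hφ₀ hm₁ hm₂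
  linear_combination (-(c * s) / 8 - s ^ 2 / 16 + 3 / 4 * φ ^ 2 - c * φ / 4 - s * φ / 4
    - c ^ 2 / 16) * hs
end

section
/- Let c < 0, -c²/4 < g < -2c²/9, and let φ : I → ℝ be a C¹ function on an open interval I with φ₀⁻ < φ(ξ) < φ₁⁻ and φ(ξ) < 0 for all ξ ∈ I, satisfying the ODE φ' = -(φ - φ₀⁻)√(φ² + l₁φ + l₂)/(2φ). Then u(x,t) = φ(x - ct) satisfies the traveling-wave equation -cφ' + 2φφ' - 6φ'φ'' - 2φφ''' = 0 wherever φ is C³. -/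
/-- A solution of the orbit ODE φ' = -(φ - φ₀⁻)√(φ² + l₁φ + l₂)/(2φ) on an open
interval, staying in (φ₀⁻, φ₁⁻) with φ < 0, satisfies the traveling-wave
equation -cφ' + 2φφ' - 6φ'φ'' - 2φφ''' = 0 wherever it is C³. -/
theorem stmt_17 (c g : ℝ) (hc : c < 0)
    (hg1 : -c ^ 2 / 4 < g) (hg2 : g < -2 * c ^ 2 / 9)
    (φ₀ φ₁ l₁ l₂ : ℝ)
    (hφ₀ : φ₀ = (c - Real.sqrt (c ^ 2 + 4 * g)) / 2)
    (hφ₁ : φ₁ = (c + 3 * Real.sqrt (c ^ 2 + 4 * g)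
      - 2 * Real.sqrt (c ^ 2 + 3 * c * Real.sqrt (c ^ 2 + 4 * g))) / 6)
    (hl₁ : l₁ = -(c + 3 * Real.sqrt (c ^ 2 + 4 * g)) / 3)
    (hl₂ : l₂ = (c ^ 2 + 6 * g - c * Real.sqrt (c ^ 2 + 4 * g)) / 6)
    (I : Set ℝ) (hI : IsOpen I) (a b : ℝ) (hIab : I = Set.Ioo a b)
    (φ : ℝ → ℝ)
    (hrange : ∀ ξ ∈ I, φ₀ < φ ξ ∧ φ ξ < φ₁ ∧ φ ξ < 0)
    (hODE : ∀ ξ ∈ I, HasDerivAt φ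
      (-(φ ξ - φ₀) * Real.sqrt ((φ ξ) ^ 2 + l₁ * φ ξ + l₂) / (2 * φ ξ)) ξ) :
    ∀ ξ ∈ I, ContDiffAt ℝ 3 φ ξ →
      -c * deriv φ ξ + 2 * φ ξ * deriv φ ξ
        - 6 * deriv φ ξ * iteratedDeriv 2 φ ξ
        - 2 * φ ξ * iteratedDeriv 3 φ ξ = 0 := by
  subst hφ₀ hφ₁ hl₁ hl₂
  set s := Real.sqrt (c ^ 2 + 4 * g) with hs_def
  have hsg : (0:ℝ) < c ^ 2 + 4 * g := by nlinarith
  have hs2 : s ^ 2 = c ^ 2 + 4 * g := Real.sq_sqrt hsg.le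
  have hs0 : 0 < s := Real.sqrt_pos.2 hsg
  have hslt : s < -c / 3 := by nlinarith [hs2, hs0]
  have hct : (0:ℝ) ≤ c ^ 2 + 3 * c * s := by nlinarith
  set t := Real.sqrt (c ^ 2 + 3 * c * s) with ht_def
  have ht2 : t ^ 2 = c ^ 2 + 3 * c * s := Real.sq_sqrt hct
  have ht0 : 0 ≤ t := Real.sqrt_nonneg _
  set p0 : ℝ := (c - s) / 2 with hp0_def
  set L1 : ℝ := -(c + 3 * s) / 3 with hL1_def
  set L2 : ℝ := (c ^ 2 + 6 * g - c * s) / 6 with hL2_def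
  -- positivity of Q along the solution
  have hQpos : ∀ ζ ∈ I, 0 < (φ ζ) ^ 2 + L1 * φ ζ + L2 := by
    intro ζ hζ
    obtain ⟨h0, h1, h2⟩ := hrange ζ hζ
    have hfac : (φ ζ) ^ 2 + L1 * φ ζ + L2
        = ((c + 3*s - 2*t)/6 - φ ζ) * ((c + 3*s + 2*t)/6 - φ ζ) := by
      rw [hL1_def, hL2_def]
      linear_combination (-(1:ℝ)/4) * hs2 + ((1:ℝ)/9) * ht2
    rw [hfac]
    have h1' : φ ζ < (c + 3*s - 2*t)/6 := h1
    exact mul_pos (by linarith) (by linarith)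
  -- positivity of the derivative
  have hyderiv : ∀ ζ ∈ I, deriv φ ζ
      = -(φ ζ - p0) * Real.sqrt ((φ ζ) ^ 2 + L1 * φ ζ + L2) / (2 * φ ζ) :=
    fun ζ hζ => (hODE ζ hζ).deriv
  have hypos : ∀ ζ ∈ I, 0 < deriv φ ζ := by
    intro ζ hζ
    obtain ⟨h0, h1, h2⟩ := hrange ζ hζ
    have hr := Real.sqrt_pos.2 (hQpos ζ hζ)
    rw [hyderiv ζ hζ]
    exact div_pos_of_neg_of_neg (by nlinarith) (by linarith)
  -- the squared orbit identity
  have hA : ∀ ζ ∈ I, 4 * (φ ζ) ^ 2 * (deriv φ ζ) ^ 2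
      = (φ ζ - p0) ^ 2 * ((φ ζ) ^ 2 + L1 * φ ζ + L2) := by
    intro ζ hζ
    have hq := (hQpos ζ hζ).le
    have hx : φ ζ ≠ 0 := (hrange ζ hζ).2.2.ne
    rw [hyderiv ζ hζ, div_pow, mul_pow, Real.sq_sqrt hq]
    field_simp
    ring
  -- local smoothness
  intro ξ hξI hC3
  obtain ⟨u, hu_nhds, hu⟩ := hC3.contDiffOn le_rfl (by simp)
  set U : Set ℝ := I ∩ interior u with hU_def
  have hUopen : IsOpen U := hI.inter isOpen_interior
  have hξU : ξ ∈ U := ⟨hξI, mem_interior_iff_mem_nhds.2 hu_nhds⟩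
  have hUI : U ⊆ I := Set.inter_subset_left
  have hC3U : ContDiffOn ℝ 3 φ U :=
    hu.mono (Set.inter_subset_right.trans interior_subset)
  have hd1 : ContDiffOn ℝ 2 (deriv φ) U := hC3U.deriv_of_isOpen hUopen (by norm_num)
  have hd2 : ContDiffOn ℝ 1 (deriv (deriv φ)) U := hd1.deriv_of_isOpen hUopen (by norm_num)
  have hdiff1 : ∀ ζ ∈ U, DifferentiableAt ℝ (deriv φ) ζ := fun ζ hζ =>
    ((hd1.differentiableOn (by norm_num)).differentiableAt (hUopen.mem_nhds hζ))
  have hdiff2 : DifferentiableAt ℝ (deriv (deriv φ)) ξ :=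
    (hd2.differentiableOn (by norm_num)).differentiableAt (hUopen.mem_nhds hξU)
  -- derivatives of the quartic G(x) = (x - p0)^2 (x^2 + L1 x + L2)
  have hQd : ∀ x : ℝ, HasDerivAt (fun x : ℝ => x ^ 2 + L1 * x + L2) (2 * x + L1) x := by
    intro x
    have := ((hasDerivAt_pow 2 x).add ((hasDerivAt_id x).const_mul L1)).add_const L2
    refine this.congr_deriv ?_
    ring
  have hSd : ∀ x : ℝ, HasDerivAt (fun x : ℝ => (x - p0) ^ 2) (2 * (x - p0)) x := by
    intro x
    have := ((hasDerivAt_id x).sub_const p0).pow 2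
    refine this.congr_deriv ?_
    simp [id]
  have hP : ∀ x : ℝ, HasDerivAt (fun x : ℝ => (x - p0) ^ 2 * (x ^ 2 + L1 * x + L2))
      (2 * (x - p0) * (x ^ 2 + L1 * x + L2) + (x - p0) ^ 2 * (2 * x + L1)) x := by
    intro x
    exact (hSd x).mul (hQd x)
  have hP' : ∀ x : ℝ, HasDerivAt
      (fun x : ℝ => 2 * (x - p0) * (x ^ 2 + L1 * x + L2) + (x - p0) ^ 2 * (2 * x + L1))
      (2 * (x ^ 2 + L1 * x + L2) + 4 * (x - p0) * (2 * x + L1) + 2 * (x - p0) ^ 2) x := by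
    intro x
    have h1 : HasDerivAt (fun x : ℝ => 2 * (x - p0)) 2 x := by
      simpa using ((hasDerivAt_id x).sub_const p0).const_mul 2
    have h2 : HasDerivAt (fun x : ℝ => 2 * x + L1) 2 x := by
      simpa using ((hasDerivAt_id x).const_mul 2).add_const L1
    have := (h1.mul (hQd x)).add ((hSd x).mul h2)
    refine this.congr_deriv ?_
    ring
  -- second-order relation on U
  have hB : ∀ ζ ∈ U, 8 * φ ζ * (deriv φ ζ) ^ 2 + 8 * (φ ζ) ^ 2 * deriv (deriv φ) ζ
      = 2 * (φ ζ - p0) * ((φ ζ) ^ 2 + L1 * φ ζ + L2) + (φ ζ - p0) ^ 2 * (2 * φ ζ + L1) := by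
    intro ζ hζ
    have hφd : HasDerivAt φ (deriv φ ζ) ζ := by
      have h := hODE ζ (hUI hζ)
      rwa [← hyderiv ζ (hUI hζ)] at h
    have hyd : HasDerivAt (deriv φ) (deriv (deriv φ) ζ) ζ := (hdiff1 ζ hζ).hasDerivAt
    have hL : HasDerivAt (fun z => 4 * (φ z) ^ 2 * (deriv φ z) ^ 2)
        (8 * φ ζ * deriv φ ζ * (deriv φ ζ) ^ 2
          + 8 * (φ ζ) ^ 2 * (deriv φ ζ * deriv (deriv φ) ζ)) ζ := by
      have := ((hφd.pow 2).const_mul 4).mul (hyd.pow 2)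
      refine this.congr_deriv ?_
      simp only [Pi.pow_apply]
      ring
    have hR : HasDerivAt (fun z => (φ z - p0) ^ 2 * ((φ z) ^ 2 + L1 * φ z + L2))
        ((2 * (φ ζ - p0) * ((φ ζ) ^ 2 + L1 * φ ζ + L2)
          + (φ ζ - p0) ^ 2 * (2 * φ ζ + L1)) * deriv φ ζ) ζ := by
      simpa [Function.comp_def] using (hP (φ ζ)).comp ζ hφd
    have heq : (fun z => 4 * (φ z) ^ 2 * (deriv φ z) ^ 2)
        =ᶠ[nhds ζ] (fun z => (φ z - p0) ^ 2 * ((φ z) ^ 2 + L1 * φ z + L2)) :=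
      Filter.eventuallyEq_of_mem (hUopen.mem_nhds hζ) (fun z hz => hA z (hUI hz))
    have huniq := (hR.congr_of_eventuallyEq heq).unique hL
    have hy := (hypos ζ (hUI hζ)).ne'
    apply mul_right_cancel₀ hy
    linear_combination - huniq
  -- third-order relation at ξ
  have hφd : HasDerivAt φ (deriv φ ξ) ξ := by
    have h := hODE ξ hξI
    rwa [← hyderiv ξ hξI] at h
  have hyd : HasDerivAt (deriv φ) (deriv (deriv φ) ξ) ξ := (hdiff1 ξ hξU).hasDerivAt
  have hy2d : HasDerivAt (deriv (deriv φ)) (deriv (deriv (deriv φ)) ξ) ξ := hdiff2.hasDerivAt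
  set x := φ ξ with hx_def
  set y := deriv φ ξ with hy_def
  set y' := deriv (deriv φ) ξ with hy'_def
  set y'' := deriv (deriv (deriv φ)) ξ with hy''_def
  have hL3 : HasDerivAt
      (fun z => 8 * φ z * (deriv φ z) ^ 2 + 8 * (φ z) ^ 2 * deriv (deriv φ) z)
      (8 * y ^ 3 + 32 * x * y * y' + 8 * x ^ 2 * y'') ξ := by
    have := ((hφd.const_mul 8).mul (hyd.pow 2)).add (((hφd.pow 2).const_mul 8).mul hy2d)
    refine this.congr_deriv ?_
    simp only [Pi.pow_apply, ← hx_def, ← hy_def, ← hy'_def]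
    ring
  have hR3 : HasDerivAt
      (fun z => 2 * (φ z - p0) * ((φ z) ^ 2 + L1 * φ z + L2) + (φ z - p0) ^ 2 * (2 * φ z + L1))
      ((2 * (x ^ 2 + L1 * x + L2) + 4 * (x - p0) * (2 * x + L1) + 2 * (x - p0) ^ 2) * y) ξ := by
    simpa [Function.comp_def] using (hP' (φ ξ)).comp ξ hφd
  have heq3 : (fun z => 8 * φ z * (deriv φ z) ^ 2 + 8 * (φ z) ^ 2 * deriv (deriv φ) z)
      =ᶠ[nhds ξ] (fun z => 2 * (φ z - p0) * ((φ z) ^ 2 + L1 * φ z + L2)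
        + (φ z - p0) ^ 2 * (2 * φ z + L1)) :=
    Filter.eventuallyEq_of_mem (hUopen.mem_nhds hξU) (fun z hz => hB z hz)
  have hCeq : 8 * y ^ 3 + 32 * x * y * y' + 8 * x ^ 2 * y''
      = (2 * (x ^ 2 + L1 * x + L2) + 4 * (x - p0) * (2 * x + L1) + 2 * (x - p0) ^ 2) * y :=
    (hL3.congr_of_eventuallyEq heq3.symm).unique hR3
  have hBeq := hB ξ hξU
  -- the key polynomial identity among the parameters
  have key : x * (2 * (x ^ 2 + L1 * x + L2) + 4 * (x - p0) * (2 * x + L1) + 2 * (x - p0) ^ 2)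
      - (2 * (x - p0) * (x ^ 2 + L1 * x + L2) + (x - p0) ^ 2 * (2 * x + L1))
      = 8 * x ^ 3 - 4 * c * x ^ 2 := by
    rw [hp0_def, hL1_def, hL2_def]
    linear_combination ((s - c) / 4) * hs2
  -- assemble
  have e2 : iteratedDeriv 2 φ = deriv (deriv φ) := by
    rw [show (2:ℕ) = 1 + 1 from rfl, iteratedDeriv_succ, iteratedDeriv_one]
  have e3 : iteratedDeriv 3 φ = deriv (deriv (deriv φ)) := by
    rw [show (3:ℕ) = 2 + 1 from rfl, iteratedDeriv_succ, e2]
  rw [e2, e3]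
  have hx0 : x ≠ 0 := (hrange ξ hξI).2.2.ne
  have h4 : 4 * x ^ 2 * (-c * y + 2 * x * y - 6 * y * y' - 2 * x * y'') = 0 := by
    linear_combination (-x) * hCeq + y * hBeq + (-y) * key
  have h4' : (4:ℝ) * x ^ 2 ≠ 0 := by positivity
  have := (mul_eq_zero.mp h4).resolve_left h4'
  linarith [this]
end
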